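/- Let X be a separable metric space, m a positive integer, s ≥ 0, and suppose that for every ε > 0, every m-element open cover {U_1,…,U_m} of X admits an open shrinking {V_1,…,V_m} with H^{s+ε}_∞(V_1 ∩ … ∩ V_m) ≤ ε. Then for every ε > 0, every finite open cover {U_1,…,U_k} of X admits an open shrinking {V_1,…,V_k} such that the (s+ε)-Hausdorff content of the set of points covered by at least m of the sets V_i is at most ε. -/

import Mathlib

open scoped ENNReal NNReal

/-- The `s`-Hausdorff content of a set `A` in a metric space. -/
noncomputable def hContent {X : Type*} [EMetricSpace X] (s : ℝ) (A : Set X) : ℝ≥0∞ :=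
  ⨅ (U : ℕ → Set X) (_ : A ⊆ ⋃ i, U i), ∑' i, EMetric.diam (U i) ^ s

/-- `Tm U m` is the set of points covered by at least `m` members of the family `U`. -/
def Tm {X ι : Type*} (U : ι → Set X) (m : ℕ) : Set X :=
  {x | ∃ S : Finset ι, m ≤ S.card ∧ ∀ i ∈ S, x ∈ U i}

lemma hContent_le {X : Type*} [EMetricSpace X] {s : ℝ} {A : Set X} (U : ℕ → Set X)
    (h : A ⊆ ⋃ i, U i) : hContent s A ≤ ∑' i, EMetric.diam (U i) ^ s :=
  iInf_le_of_le U (iInf_le _ h)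

lemma hContent_mono {X : Type*} [EMetricSpace X] {s : ℝ} {A B : Set X} (h : A ⊆ B) :
    hContent s A ≤ hContent s B :=
  le_iInf₂ fun U hU => hContent_le U (h.trans hU)

lemma hContent_empty {X : Type*} [EMetricSpace X] {s : ℝ} (hs : 0 < s) :
    hContent s (∅ : Set X) = 0 := by
  refine le_antisymm ?_ (zero_le)
  have := hContent_le (s := s) (A := (∅ : Set X)) (fun _ => (∅ : Set X)) (by simp)
  simpa [EMetric.diam, EMetric.diam_empty, ENNReal.zero_rpow_of_pos hs] using this

lemma hContent_union {X : Type*} [EMetricSpace X] {s : ℝ} (A B : Set X) :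
    hContent s (A ∪ B) ≤ hContent s A + hContent s B := by
  refine ENNReal.le_of_forall_pos_le_add fun ε hε hfin => ?_
  have hfA : hContent s A ≠ ⊤ := ne_top_of_lt (lt_of_le_of_lt le_self_add hfin)
  have hfB : hContent s B ≠ ⊤ := ne_top_of_lt (lt_of_le_of_lt le_add_self hfin)
  have h2 : (0 : ℝ≥0∞) < ε / 2 :=
    ENNReal.div_pos (by exact_mod_cast hε.ne') (by norm_num)
  obtain ⟨Ua, hUa, hsa⟩ : ∃ Ua : ℕ → Set X, ∃ _ : A ⊆ ⋃ i, Ua i,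
      ∑' i, EMetric.diam (Ua i) ^ s < hContent s A + ε / 2 := by
    have := ENNReal.lt_add_right hfA h2.ne'
    rw [hContent, iInf_lt_iff] at this
    simpa [iInf_lt_iff, hContent] using this
  obtain ⟨Ub, hUb, hsb⟩ : ∃ Ub : ℕ → Set X, ∃ _ : B ⊆ ⋃ i, Ub i,
      ∑' i, EMetric.diam (Ub i) ^ s < hContent s B + ε / 2 := by
    have := ENNReal.lt_add_right hfB h2.ne'
    rw [hContent, iInf_lt_iff] at this
    simpa [iInf_lt_iff, hContent] using this
  set Z : ℕ → Set X := fun n => if Even n then Ua (n / 2) else Ub (n / 2) with hZ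
  have hcov : A ∪ B ⊆ ⋃ i, Z i := by
    rintro x (hx | hx)
    · obtain ⟨i, hi⟩ := Set.mem_iUnion.mp (hUa hx)
      exact Set.mem_iUnion.mpr ⟨2 * i, by simp [hZ, Nat.mul_div_cancel_left i two_pos, hi]⟩
    · obtain ⟨i, hi⟩ := Set.mem_iUnion.mp (hUb hx)
      refine Set.mem_iUnion.mpr ⟨2 * i + 1, ?_⟩
      have he : ¬ Even (2 * i + 1) := by simp [Nat.even_add_one]
      have hd : (2 * i + 1) / 2 = i := by omega
      simp [hZ, he, hd, hi]
  have key := hContent_le (s := s) Z hcov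
  have hsplit : ∑' i, EMetric.diam (Z i) ^ s
      = (∑' i, EMetric.diam (Ua i) ^ s) + ∑' i, EMetric.diam (Ub i) ^ s := by
    rw [← tsum_even_add_odd (f := fun n => EMetric.diam (Z n) ^ s)
      ENNReal.summable ENNReal.summable]
    congr 1
    · refine tsum_congr fun i => ?_
      simp [hZ, Nat.mul_div_cancel_left i two_pos]
    · refine tsum_congr fun i => ?_
      have he : ¬ Even (2 * i + 1) := by simp [Nat.even_add_one]
      have hd : (2 * i + 1) / 2 = i := by omega
      simp [hZ, he, hd]
  calc hContent s (A ∪ B) ≤ _ := key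
    _ = _ := hsplit
    _ ≤ (hContent s A + ε / 2) + (hContent s B + ε / 2) := add_le_add hsa.le hsb.le
    _ = hContent s A + hContent s B + (ε / 2 + ε / 2) := by ring
    _ = hContent s A + hContent s B + ε := by rw [ENNReal.add_halves]

lemma hContent_finset_iUnion {X ι : Type*} [EMetricSpace X] {s : ℝ} (hs : 0 < s)
    (T : Finset ι) (A : ι → Set X) :
    hContent s (⋃ i ∈ T, A i) ≤ ∑ i ∈ T, hContent s (A i) := by
  classical
  induction T using Finset.induction_on with
  | empty => simp [hContent_empty hs]
  | insert a T hnotmem ih =>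
    rw [Finset.set_biUnion_insert, Finset.sum_insert hnotmem]
    exact (hContent_union _ _).trans (add_le_add le_rfl ih)

lemma hContent_le_of_exponent {X : Type*} [EMetricSpace X] {s t : ℝ} (hs : 0 < s)
    (hst : s ≤ t) {A : Set X} (hA : hContent s A < 1) : hContent t A ≤ hContent s A := by
  have key : ∀ c : ℝ≥0∞, hContent s A < c → c ≤ 1 → hContent t A < c := by
    intro c hc hc1
    obtain ⟨U, hU, hsum⟩ : ∃ U : ℕ → Set X, ∃ _ : A ⊆ ⋃ i, U i,
        ∑' i, EMetric.diam (U i) ^ s < c := by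
      rw [hContent, iInf_lt_iff] at hc
      simpa [iInf_lt_iff] using hc
    refine lt_of_le_of_lt ((hContent_le U hU).trans (ENNReal.tsum_le_tsum fun i => ?_)) hsum
    have hdi : EMetric.diam (U i) ^ s < 1 :=
      ((ENNReal.le_tsum i).trans_lt hsum).trans_le hc1
    have hd1 : EMetric.diam (U i) ≤ 1 := by
      by_contra h
      exact absurd (ENNReal.one_le_rpow (le_of_not_ge h) hs) (not_le.mpr hdi)
    exact ENNReal.rpow_le_rpow_of_exponent_ge hd1 hst
  by_contra h
  obtain ⟨c, hc1, hc2⟩ := exists_between (not_le.mp h)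
  rcases le_or_gt c 1 with h1 | h1
  · exact absurd (key c hc1 h1) (not_lt.mpr hc2.le)
  · exact absurd ((key 1 hA le_rfl).trans h1) (not_lt.mpr hc2.le)
lemma shrink_step {X : Type*} [MetricSpace X]
    {m : ℕ} {t : ℝ} {c : ℝ≥0∞}
    (H : ∀ U : Fin m → Set X, (∀ i, IsOpen (U i)) → (⋃ i, U i) = Set.univ →
      ∃ V : Fin m → Set X, (∀ i, IsOpen (V i)) ∧ (∀ i, V i ⊆ U i) ∧ (⋃ i, V i) = Set.univ ∧
        hContent t (⋂ i, V i) ≤ c)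
    {k : ℕ} (V : Fin k → Set X) (hVo : ∀ i, IsOpen (V i)) (hVc : (⋃ i, V i) = Set.univ)
    (S : Finset (Fin k)) (hS : S.card = m) (hSne : S.Nonempty) :
    ∃ V' : Fin k → Set X, (∀ i, IsOpen (V' i)) ∧ (∀ i, V' i ⊆ V i) ∧ (⋃ i, V' i) = Set.univ ∧
      hContent t (⋂ i ∈ S, V' i) ≤ c := by
  classical
  obtain ⟨i₀, hi₀⟩ := hSne
  set e : {x // x ∈ S} ≃ Fin m := Finset.equivFinOfCardEq hS with he
  set R : Set X := ⋃ i, ⋃ (_ : i ∉ S), V i with hR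
  have hRo : IsOpen R := isOpen_iUnion fun i => isOpen_iUnion fun _ => hVo i
  set W : Fin m → Set X :=
    fun j => if (e.symm j : Fin k) = i₀ then V i₀ ∪ R else V ((e.symm j : Fin k)) with hW
  have hWo : ∀ j, IsOpen (W j) := by
    intro j
    rw [hW]
    dsimp only
    split
    · exact (hVo i₀).union hRo
    · exact hVo _
  have hWc : (⋃ j, W j) = Set.univ := by
    rw [Set.eq_univ_iff_forall]
    intro x
    have hx : x ∈ ⋃ i, V i := by rw [hVc]; trivial
    obtain ⟨i, hi⟩ := Set.mem_iUnion.mp hx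
    rw [Set.mem_iUnion]
    by_cases hiS : i ∈ S
    · refine ⟨e ⟨i, hiS⟩, ?_⟩
      rw [hW]
      simp only [Equiv.symm_apply_apply]
      by_cases hii : i = i₀
      · subst hii
        simp only [if_pos rfl]
        exact Or.inl hi
      · simpa [hii] using hi
    · refine ⟨e ⟨i₀, hi₀⟩, ?_⟩
      rw [hW]
      simp only [Equiv.symm_apply_apply, if_pos rfl]
      exact Or.inr (Set.mem_iUnion₂.mpr ⟨i, hiS, hi⟩)
  obtain ⟨V'', hV''o, hV''sub, hV''cov, hV''cont⟩ := H W hWo hWc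
  set j₀ : Fin m := e ⟨i₀, hi₀⟩ with hj₀def
  have hj₀ : e.symm j₀ = ⟨i₀, hi₀⟩ := Equiv.symm_apply_apply e _
  set V' : Fin k → Set X := fun i =>
    if h : i ∈ S then (if i = i₀ then V i₀ ∩ V'' j₀ else V'' (e ⟨i, h⟩)) else V i ∩ V'' j₀
    with hV'
  -- auxiliary: the value of W at non-i₀ points of S
  have hWval : ∀ (i : Fin k) (h : i ∈ S), i ≠ i₀ → W (e ⟨i, h⟩) = V i := by
    intro i h hne
    rw [hW]
    simp only [Equiv.symm_apply_apply]
    exact if_neg hne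
  have hj₀inv : ∀ j : Fin m, (e.symm j : Fin k) = i₀ → j = j₀ := by
    intro j hj
    have : e.symm j = ⟨i₀, hi₀⟩ := Subtype.ext hj
    rw [← Equiv.apply_symm_apply e j, this, hj₀def]
  have hsub : ∀ i, V' i ⊆ V i := by
    intro i
    rw [hV']
    by_cases h : i ∈ S
    · by_cases hii : i = i₀
      · subst hii; simp only [dif_pos h, if_pos rfl]; exact Set.inter_subset_left
      · simp only [dif_pos h, if_neg hii]
        exact (hV''sub _).trans (hWval i h hii).subset
    · simp only [dif_neg h]; exact Set.inter_subset_left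
  refine ⟨V', ?_, hsub, ?_, ?_⟩
  · intro i
    rw [hV']
    by_cases h : i ∈ S
    · by_cases hii : i = i₀
      · subst hii; simp only [dif_pos h, if_pos rfl]; exact (hVo i).inter (hV''o j₀)
      · simp only [dif_pos h, if_neg hii]; exact hV''o _
    · simp only [dif_neg h]; exact (hVo i).inter (hV''o j₀)
  · rw [Set.eq_univ_iff_forall]
    intro x
    have hx : x ∈ ⋃ j, V'' j := by rw [hV''cov]; trivial
    obtain ⟨j, hj⟩ := Set.mem_iUnion.mp hx
    rw [Set.mem_iUnion]
    by_cases hji : (e.symm j : Fin k) = i₀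
    · have hjj : j = j₀ := hj₀inv j hji
      subst hjj
      have hxW : x ∈ W j₀ := hV''sub j₀ hj
      simp only [hW] at hxW
      rw [if_pos hji] at hxW
      rcases hxW with hx0 | hxR
      · exact ⟨i₀, by rw [hV']; simp only [dif_pos hi₀, if_pos rfl]; exact ⟨hx0, hj⟩⟩
      · obtain ⟨i, hiS, hxi⟩ := Set.mem_iUnion₂.mp hxR
        exact ⟨i, by rw [hV']; simp only [dif_neg hiS]; exact ⟨hxi, hj⟩⟩
    · have hiS : ((e.symm j : Fin k)) ∈ S := (e.symm j).2
      refine ⟨(e.symm j : Fin k), ?_⟩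
      simp only [hV', dif_pos hiS, if_neg hji]
      have heq : e ⟨(e.symm j : Fin k), hiS⟩ = j := by
        convert Equiv.apply_symm_apply e j
      rw [heq]
      exact hj
  · refine le_trans (hContent_mono ?_) hV''cont
    intro x hx
    rw [Set.mem_iInter]
    intro j
    have hiS : ((e.symm j : Fin k)) ∈ S := (e.symm j).2
    have hxV' : x ∈ V' (e.symm j : Fin k) := Set.mem_iInter₂.mp hx _ hiS
    by_cases hji : (e.symm j : Fin k) = i₀
    · have hjj : j = j₀ := hj₀inv j hji
      subst hjj
      rw [hji] at hxV'
      simp only [hV', dif_pos hi₀, if_pos rfl] at hxV'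
      exact hxV'.2
    · simp only [hV', dif_pos hiS, if_neg hji] at hxV'
      have heq : e ⟨(e.symm j : Fin k), hiS⟩ = j := by
        convert Equiv.apply_symm_apply e j
      rwa [heq] at hxV'


lemma shrink_many {X : Type*} [MetricSpace X]
    {m : ℕ} (hm : 0 < m) {t : ℝ} {c : ℝ≥0∞}
    (H : ∀ U : Fin m → Set X, (∀ i, IsOpen (U i)) → (⋃ i, U i) = Set.univ →
      ∃ V : Fin m → Set X, (∀ i, IsOpen (V i)) ∧ (∀ i, V i ⊆ U i) ∧ (⋃ i, V i) = Set.univ ∧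
        hContent t (⋂ i, V i) ≤ c)
    {k : ℕ} (U : Fin k → Set X) (hUo : ∀ i, IsOpen (U i)) (hUc : (⋃ i, U i) = Set.univ)
    (𝒯 : Finset (Finset (Fin k))) (h𝒯 : ∀ S ∈ 𝒯, S.card = m) :
    ∃ V : Fin k → Set X, (∀ i, IsOpen (V i)) ∧ (∀ i, V i ⊆ U i) ∧ (⋃ i, V i) = Set.univ ∧
      ∀ S ∈ 𝒯, hContent t (⋂ i ∈ S, V i) ≤ c := by
  classical
  induction 𝒯 using Finset.induction_on with
  | empty => exact ⟨U, hUo, fun i => le_rfl, hUc, by simp⟩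
  | insert a 𝒯 hnotmem ih =>
    obtain ⟨V, hVo, hVsub, hVc, hVbd⟩ := ih fun S hS => h𝒯 S (Finset.mem_insert_of_mem hS)
    have hacard : a.card = m := h𝒯 a (Finset.mem_insert_self a 𝒯)
    have hane : a.Nonempty := Finset.card_pos.mp (hacard ▸ hm)
    obtain ⟨V', hV'o, hV'sub, hV'c, hV'bd⟩ := shrink_step H V hVo hVc a hacard hane
    refine ⟨V', hV'o, fun i => (hV'sub i).trans (hVsub i), hV'c, ?_⟩
    intro S hS
    rcases Finset.mem_insert.mp hS with rfl | hS
    · exact hV'bd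
    · exact le_trans (hContent_mono (Set.iInter₂_mono fun i _ => hV'sub i)) (hVbd S hS)

theorem stmt4 {X : Type*} [MetricSpace X] [TopologicalSpace.SeparableSpace X]
    (m : ℕ) (hm : 0 < m) (s : ℝ) (hs : 0 ≤ s)
    (H : ∀ ε : ℝ, 0 < ε → ∀ U : Fin m → Set X, (∀ i, IsOpen (U i)) → (⋃ i, U i) = Set.univ →
      ∃ V : Fin m → Set X, (∀ i, IsOpen (V i)) ∧ (∀ i, V i ⊆ U i) ∧ (⋃ i, V i) = Set.univ ∧
        hContent (s + ε) (⋂ i, V i) ≤ ENNReal.ofReal ε) :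
    ∀ ε : ℝ, 0 < ε → ∀ (k : ℕ) (U : Fin k → Set X), (∀ i, IsOpen (U i)) →
      (⋃ i, U i) = Set.univ →
      ∃ V : Fin k → Set X, (∀ i, IsOpen (V i)) ∧ (∀ i, V i ⊆ U i) ∧ (⋃ i, V i) = Set.univ ∧
        hContent (s + ε) (Tm V m) ≤ ENNReal.ofReal ε := by
  intro ε hε k U hUo hUc
  classical
  set C : ℕ := k.choose m with hC
  set ε' : ℝ := min ε 1 / (C + 1) with hε'def
  have hCpos : (0 : ℝ) < C + 1 := by positivity
  have hε'pos : 0 < ε' := by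
    apply div_pos _ hCpos
    exact lt_min hε one_pos
  have hε'le : ε' ≤ ε := by
    calc ε' ≤ min ε 1 := by
          rw [hε'def]
          exact div_le_self (le_of_lt (lt_min hε one_pos)) (by norm_num)
      _ ≤ ε := min_le_left _ _
  have hCε' : (C : ℝ) * ε' ≤ min ε 1 := by
    rw [hε'def]
    calc (C : ℝ) * (min ε 1 / (C + 1)) ≤ (C + 1) * (min ε 1 / (C + 1)) := by
          apply mul_le_mul_of_nonneg_right (by linarith) (by positivity)
      _ = min ε 1 := by field_simp
  have hCε'lt1 : (C : ℝ) * ε' < 1 := by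
    have h1 : (C : ℝ) * ε' < ((C : ℝ) + 1) * ε' :=
      mul_lt_mul_of_pos_right (lt_add_one _) hε'pos
    have h2 : ((C : ℝ) + 1) * ε' = min ε 1 := by rw [hε'def]; field_simp
    calc (C : ℝ) * ε' < ((C : ℝ) + 1) * ε' := h1
      _ = min ε 1 := h2
      _ ≤ 1 := min_le_right _ _
  have hsumpos : 0 < s + ε' := by linarith
  set 𝒮 : Finset (Finset (Fin k)) := Finset.powersetCard m Finset.univ with h𝒮
  have h𝒮m : ∀ S ∈ 𝒮, S.card = m := fun S hS => (Finset.mem_powersetCard.mp hS).2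
  obtain ⟨V, hVo, hVsub, hVc, hVbd⟩ :=
    shrink_many hm (H ε' hε'pos) U hUo hUc 𝒮 h𝒮m
  refine ⟨V, hVo, hVsub, hVc, ?_⟩
  have hTm : Tm V m ⊆ ⋃ S ∈ 𝒮, ⋂ i ∈ S, V i := by
    rintro x ⟨T, hTcard, hT⟩
    obtain ⟨S, hST, hScard⟩ := Finset.exists_subset_card_eq hTcard
    refine Set.mem_iUnion₂.mpr ⟨S, ?_, ?_⟩
    · exact Finset.mem_powersetCard.mpr ⟨Finset.subset_univ S, hScard⟩
    · exact Set.mem_iInter₂.mpr fun i hi => hT i (hST hi)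
  have h𝒮card : 𝒮.card = C := by
    rw [h𝒮, Finset.card_powersetCard, Finset.card_univ, Fintype.card_fin, hC]
  have hbound : hContent (s + ε') (Tm V m) ≤ ENNReal.ofReal ((C : ℝ) * ε') := by
    calc hContent (s + ε') (Tm V m)
        ≤ hContent (s + ε') (⋃ S ∈ 𝒮, ⋂ i ∈ S, V i) := hContent_mono hTm
      _ ≤ ∑ S ∈ 𝒮, hContent (s + ε') (⋂ i ∈ S, V i) := hContent_finset_iUnion hsumpos 𝒮 _
      _ ≤ ∑ _S ∈ 𝒮, ENNReal.ofReal ε' := Finset.sum_le_sum hVbd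
      _ = 𝒮.card • ENNReal.ofReal ε' := by rw [Finset.sum_const]
      _ = (C : ℝ≥0∞) * ENNReal.ofReal ε' := by rw [nsmul_eq_mul, h𝒮card]
      _ = ENNReal.ofReal (C : ℝ) * ENNReal.ofReal ε' := by rw [ENNReal.ofReal_natCast]
      _ = ENNReal.ofReal ((C : ℝ) * ε') := (ENNReal.ofReal_mul (Nat.cast_nonneg C)).symm
  have hlt1 : hContent (s + ε') (Tm V m) < 1 :=
    lt_of_le_of_lt hbound (by rw [ENNReal.ofReal_lt_one]; exact hCε'lt1)
  calc hContent (s + ε) (Tm V m)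
      ≤ hContent (s + ε') (Tm V m) := hContent_le_of_exponent hsumpos (by linarith) hlt1
    _ ≤ ENNReal.ofReal ((C : ℝ) * ε') := hbound
    _ ≤ ENNReal.ofReal ε := ENNReal.ofReal_le_ofReal (hCε'.trans (min_le_left _ _))
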